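/- Let S_n be the tournament on vertices v_1,...,v_n obtained from the transitive tournament (where v_i beats v_j iff i > j, i.e., out-neighbors of v_i are v_1,...,v_{i−1}) by reversing the edges of the Hamiltonian path v_n, v_{n−1}, ..., v_1. Then its dichromatic polynomial satisfies P(S_n; x) = Σ_{i=1}^n binom(i, n−i) · x · (x−1)^{i−1}. Equivalently, P(S_1;x) = x, P(S_2;x) = x², and P(S_n;x) = (x−1)(P(S_{n−1};x) + P(S_{n−2};x)) for n ≥ 3. -/

import Mathlib

variable {V : Type*}

/-- A directed cycle in a digraph `D`, given as an injective map `Fin m → V`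
(`m ≥ 2`) whose consecutive images (cyclically) are edges of `D`. -/
def IsCycleFun (D : V → V → Prop) {m : ℕ} (f : Fin m → V) : Prop :=
  2 ≤ m ∧ Function.Injective f ∧ ∀ i : Fin m, D (f i) (f (finRotate m i))

/-- The set `S` contains a directed cycle of `D`. -/
def HasCycleIn (D : V → V → Prop) (S : Set V) : Prop :=
  ∃ (m : ℕ) (f : Fin m → V), IsCycleFun D f ∧ ∀ i, f i ∈ S

/-- Out-degree of a vertex. -/
noncomputable def outDeg (D : V → V → Prop) (v : V) : ℕ := Nat.card {u | D v u}

/-- In-degree of a vertex. -/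
noncomputable def inDeg (D : V → V → Prop) (v : V) : ℕ := Nat.card {u | D u v}

/-- A coloring of the vertices of `D` with no monochromatic directed cycle. -/
def ProperColoring (D : V → V → Prop) {k : ℕ} (c : V → Fin k) : Prop :=
  ∀ (m : ℕ) (f : Fin m → V), IsCycleFun D f → ∃ i j, c (f i) ≠ c (f j)

/-- The number of proper `k`-colorings of `D` (value of the dichromatic polynomial). -/
noncomputable def numColorings (V : Type*) (D : V → V → Prop) (k : ℕ) : ℕ :=
  Nat.card {c : V → Fin k // ProperColoring D c}

/-- The finset `S` carries a (Hamiltonian on `S`) directed cycle of `D`. -/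
def IsCycleSet (D : V → V → Prop) (S : Finset V) : Prop :=
  2 ≤ S.card ∧ ∃ f : Fin S.card ≃ {x // x ∈ S},
    ∀ i, D (f i) (f (finRotate S.card i))

/-- The finset `S` induces exactly a directed cycle of `D`. -/
def IsInducedCycleSet (D : V → V → Prop) (S : Finset V) : Prop :=
  2 ≤ S.card ∧ ∃ f : Fin S.card ≃ {x // x ∈ S},
    (∀ i, D (f i) (f (finRotate S.card i))) ∧
    ∀ a b : {x // x ∈ S}, D (a : V) b → ∃ i, f i = a ∧ f (finRotate S.card i) = b

/-- `D` has girth `g` : it has a directed cycle of length `g` and no shorter one. -/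
def HasGirth (D : V → V → Prop) (g : ℕ) : Prop :=
  (∃ f : Fin g → V, IsCycleFun D f) ∧
    ∀ (m : ℕ) (f : Fin m → V), IsCycleFun D f → g ≤ m


/-- The tournament Sₙ: vᵢ → vⱼ for j < i − 1 (transitive edges) together with the
reversed Hamiltonian path edges vᵢ → vᵢ₊₁ (0-indexed on Fin n). -/
def SnAdj (n : ℕ) (a b : Fin n) : Prop := b.1 + 1 < a.1 ∨ a.1 + 1 = b.1


/-- No three consecutive vertices share a color. -/
def NT {n k : ℕ} (c : Fin n → Fin k) : Prop :=
  ∀ i : ℕ, (h : i + 2 < n) →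
    ¬ (c ⟨i, by omega⟩ = c ⟨i+1, by omega⟩ ∧ c ⟨i+1, by omega⟩ = c ⟨i+2, h⟩)

lemma exists_two_steps {n m : ℕ} {f : Fin m → Fin n} (hf : IsCycleFun (SnAdj n) f) :
    ∃ i : Fin m, ((f (finRotate m i) : ℕ) = (f i : ℕ) + 1) ∧
      ((f (finRotate m (finRotate m i)) : ℕ) = (f i : ℕ) + 2) := by
  obtain ⟨hm, hinj, hedge⟩ := hf
  set r := finRotate m with hr
  set d : Fin m → ℤ := fun i => (f (r i) : ℤ) - (f i : ℤ) with hd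
  have hsum : ∑ i, d i = 0 := by
    have := Equiv.sum_comp r (fun i => ((f i : ℤ)))
    simp only [hd, Finset.sum_sub_distrib]
    omega
  have hcase : ∀ i, d i = 1 ∨ d i ≤ -2 := by
    intro i
    rcases hedge i with h | h
    · right; simp only [hd]; omega
    · left; simp only [hd]; omega
  suffices hs : ∃ i, d i = 1 ∧ d (r i) = 1 by
    obtain ⟨i, h1, h2⟩ := hs
    refine ⟨i, by simp only [hd] at h1; omega, by simp only [hd] at h1 h2; omega⟩
  by_contra hcon
  push_neg at hcon
  classical
  set T : Finset (Fin m) := Finset.univ.filter (fun i => d i = 1) with hT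
  have hmapsto : ∀ i ∈ T, r i ∈ Tᶜ := by
    intro i hi
    simp only [hT, Finset.mem_filter, Finset.mem_univ, true_and] at hi
    simp only [Finset.mem_compl, hT, Finset.mem_filter, Finset.mem_univ, true_and]
    exact hcon i hi
  have hcard : T.card ≤ Tᶜ.card :=
    Finset.card_le_card_of_injOn r hmapsto (r.injective.injOn)
  have hTne : T ≠ Finset.univ := by
    intro h
    have h0 : (⟨0, by omega⟩ : Fin m) ∈ T := by rw [h]; exact Finset.mem_univ _
    have := hmapsto _ h0
    rw [h] at this
    simp at this
  have hTcpos : 0 < Tᶜ.card := by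
    rcases Finset.eq_empty_or_nonempty Tᶜ with h | h
    · exact absurd (by simpa [Finset.compl_eq_empty_iff] using h) hTne
    · exact Finset.card_pos.mpr h
  have hsplit : ∑ i ∈ T, d i + ∑ i ∈ Tᶜ, d i = 0 := by
    rw [Finset.sum_add_sum_compl]; exact hsum
  have hsT : ∑ i ∈ T, d i = T.card := by
    rw [Finset.sum_congr rfl (fun i hi => by
      simp only [hT, Finset.mem_filter] at hi; exact hi.2)]
    simp
  have hsTc : ∑ i ∈ Tᶜ, d i ≤ -2 * Tᶜ.card := by
    calc ∑ i ∈ Tᶜ, d i ≤ ∑ _i ∈ Tᶜ, (-2 : ℤ) := by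
          refine Finset.sum_le_sum fun i hi => ?_
          simp only [Finset.mem_compl, hT, Finset.mem_filter, Finset.mem_univ, true_and] at hi
          rcases hcase i with h | h
          · exact absurd h hi
          · exact h
      _ = -2 * Tᶜ.card := by simp [mul_comm]
  omega

lemma proper_iff {n k : ℕ} (c : Fin n → Fin k) :
    ProperColoring (SnAdj n) c ↔ NT c := by
  constructor
  · intro hp i hi hc
    obtain ⟨hc1, hc2⟩ := hc
    set f : Fin 3 → Fin n := fun t => ⟨i + t.1, by omega⟩ with hfd
    have hrot : ∀ t : Fin 3, (finRotate 3 t).1 = (t.1 + 1) % 3 := by decide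
    have hcyc : IsCycleFun (SnAdj n) f := by
      refine ⟨by norm_num, ?_, ?_⟩
      · intro s t hst
        have h1 := congrArg Fin.val hst
        simp only [hfd] at h1
        exact Fin.ext (by omega)
      · intro t
        have h1 := hrot t
        have h2 := t.2
        show i + (finRotate 3 t).1 + 1 < i + t.1 ∨ i + t.1 + 1 = i + (finRotate 3 t).1
        omega
    obtain ⟨s, t, hst⟩ := hp 3 f hcyc
    apply hst
    have key : ∀ u : Fin 3, c (f u) = c ⟨i, by omega⟩ := by
      intro u
      rcases u with ⟨uv, hu⟩
      interval_cases uv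
      · rfl
      · exact hc1.symm
      · exact (hc1.trans hc2).symm
    rw [key s, key t]
  · intro hnt m f hf
    by_contra h
    push_neg at h
    obtain ⟨i, h1, h2⟩ := exists_two_steps hf
    refine hnt (f i : ℕ) (by have := (f (finRotate m (finRotate m i))).2; omega) ⟨?_, ?_⟩
    · have e1 : (⟨(f i : ℕ), by omega⟩ : Fin n) = f i := by apply Fin.ext; rfl
      have e2 : (⟨(f i : ℕ) + 1, by omega⟩ : Fin n) = f (finRotate m i) := by
        apply Fin.ext; exact h1.symm
      rw [e1, e2]; exact h i (finRotate m i)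
    · have e2 : (⟨(f i : ℕ) + 1, by omega⟩ : Fin n) = f (finRotate m i) := by
        apply Fin.ext; exact h1.symm
      have e3 : (⟨(f i : ℕ) + 2, by omega⟩ : Fin n) = f (finRotate m (finRotate m i)) := by
        apply Fin.ext; exact h2.symm
      rw [e2, e3]; exact h _ _

lemma tail_mk {n : ℕ} {α : Type*} (c : Fin (n+1) → α) (i : ℕ) (h : i < n) :
    Fin.tail c ⟨i, h⟩ = c ⟨i+1, by omega⟩ := rfl

lemma cons_mk0 {n : ℕ} {α : Type*} (x : α) (d : Fin n → α) (h : 0 < n+1) :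
    (Fin.cons x d : Fin (n+1) → α) ⟨0, h⟩ = x := rfl

lemma cons_mkS {n : ℕ} {α : Type*} (x : α) (d : Fin n → α) (i : ℕ) (h : i+1 < n+1) :
    (Fin.cons x d : Fin (n+1) → α) ⟨i+1, h⟩ = d ⟨i, by omega⟩ := rfl

lemma nt_tail {n k : ℕ} {c : Fin (n+1) → Fin k} (h : NT c) : NT (Fin.tail c) := by
  intro i hi hc
  refine h (i+1) (by omega) ⟨?_, ?_⟩
  · exact hc.1
  · exact hc.2

lemma nt_of_tail {n k : ℕ} {c : Fin (n+1) → Fin k} (ht : NT (Fin.tail c))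
    (h0 : ∀ (h : 2 < n+1),
      ¬ (c ⟨0, by omega⟩ = c ⟨1, by omega⟩ ∧ c ⟨1, by omega⟩ = c ⟨2, h⟩)) : NT c := by
  intro i hi hc
  match i with
  | 0 => exact h0 hi hc
  | (j+1) => exact ht j (by omega) ⟨hc.1, hc.2⟩

lemma card_split {α : Type*} [Finite α] (P Q : α → Prop) :
    Nat.card {c // P c} = Nat.card {c // P c ∧ Q c} + Nat.card {c // P c ∧ ¬ Q c} := by
  classical
  rw [← Nat.card_sum]
  refine (Nat.card_congr ?_).symm
  exact ((Equiv.subtypeSubtypeEquivSubtypeInter P Q).symm.sumCongr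
    (Equiv.subtypeSubtypeEquivSubtypeInter P (fun c => ¬ Q c)).symm).trans
      (Equiv.sumCompl _)

def equivNe (K m : ℕ) :
    {c : Fin (m+2) → Fin (K+1) // NT c ∧ c ⟨0, by omega⟩ ≠ c ⟨1, by omega⟩} ≃
      ({d : Fin (m+1) → Fin (K+1) // NT d} × Fin K) where
  toFun c := (⟨Fin.tail c.1, nt_tail c.2.1⟩,
    (finSuccAboveEquiv (c.1 ⟨1, by omega⟩)).symm ⟨c.1 ⟨0, by omega⟩, c.2.2⟩)
  invFun p := ⟨Fin.cons ((finSuccAboveEquiv (p.1.1 ⟨0, by omega⟩)) p.2).1 p.1.1, by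
    have hne : ((finSuccAboveEquiv (p.1.1 ⟨0, by omega⟩)) p.2).1 ≠ p.1.1 ⟨0, by omega⟩ :=
      ((finSuccAboveEquiv (p.1.1 ⟨0, by omega⟩)) p.2).2
    constructor
    · apply nt_of_tail
      · rw [Fin.tail_cons]; exact p.1.2
      · intro h hx
        rw [cons_mk0, cons_mkS] at hx
        exact hne hx.1
    · rw [cons_mk0, cons_mkS]
      exact hne⟩
  left_inv := by
    rintro ⟨c, hnt, hne⟩
    dsimp only
    apply Subtype.ext
    show Fin.cons _ (Fin.tail c) = c
    have key : (finSuccAboveEquiv (Fin.tail c ⟨0, by omega⟩)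
        ((finSuccAboveEquiv (c ⟨1, by omega⟩)).symm ⟨c ⟨0, by omega⟩, hne⟩)).1
        = c ⟨0, by omega⟩ := by
      have : Fin.tail c ⟨0, by omega⟩ = c ⟨1, by omega⟩ := rfl
      rw [this, Equiv.apply_symm_apply]
    rw [key]
    funext i
    match i with
    | ⟨0, h⟩ => rw [cons_mk0]
    | ⟨j+1, h⟩ => rw [cons_mkS]; rfl
  right_inv := by
    rintro ⟨⟨d, hd⟩, y⟩
    have h1 : Fin.tail (Fin.cons ((finSuccAboveEquiv (d ⟨0, by omega⟩)) y).1 d :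
        Fin (m+2) → Fin (K+1)) = d :=
      @Fin.tail_cons (m+1) (fun _ => Fin (K+1)) ((finSuccAboveEquiv (d ⟨0, by omega⟩)) y).1 d
    refine Prod.ext ?_ ?_
    · exact Subtype.ext h1
    · exact Equiv.symm_apply_apply (finSuccAboveEquiv (d ⟨0, by omega⟩)) y

lemma tail_cons' {n : ℕ} {α : Type*} (x : α) (d : Fin n → α) :
    Fin.tail (Fin.cons x d : Fin (n+1) → α) = d :=
  @Fin.tail_cons n (fun _ => α) x d

def equivEq (K m : ℕ) :
    {c : Fin (m+3) → Fin (K+1) // NT c ∧ c ⟨0, by omega⟩ = c ⟨1, by omega⟩} ≃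
      {d : Fin (m+2) → Fin (K+1) // NT d ∧ d ⟨0, by omega⟩ ≠ d ⟨1, by omega⟩} where
  toFun c := ⟨Fin.tail c.1, nt_tail c.2.1, by
    intro h
    exact c.2.1 0 (by omega) ⟨c.2.2, h⟩⟩
  invFun d := ⟨Fin.cons (d.1 ⟨0, by omega⟩) d.1, by
    refine ⟨nt_of_tail ?_ ?_, ?_⟩
    · rw [tail_cons']; exact d.2.1
    · intro h hx
      exact d.2.2 hx.2
    · rfl⟩
  left_inv := by
    rintro ⟨c, hnt, heq⟩
    dsimp only
    apply Subtype.ext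
    show Fin.cons (Fin.tail c ⟨0, by omega⟩) (Fin.tail c) = c
    have h1 : Fin.tail c ⟨0, by omega⟩ = c ⟨0, by omega⟩ := heq.symm
    rw [h1]
    funext i
    match i with
    | ⟨0, h⟩ => rfl
    | ⟨j+1, h⟩ => rfl
  right_inv := by
    rintro ⟨d, hd⟩
    dsimp only
    apply Subtype.ext
    exact tail_cons' (d ⟨0, Nat.zero_lt_succ _⟩) d

lemma card_nt_ne (K m : ℕ) :
    Nat.card {c : Fin (m+2) → Fin (K+1) // NT c ∧ c ⟨0, by omega⟩ ≠ c ⟨1, by omega⟩}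
      = Nat.card {d : Fin (m+1) → Fin (K+1) // NT d} * K := by
  rw [Nat.card_congr (equivNe K m), Nat.card_prod]
  simp [Nat.card_eq_fintype_card]

lemma card_rec (K m : ℕ) :
    Nat.card {c : Fin (m+3) → Fin (K+1) // NT c} =
      K * (Nat.card {c : Fin (m+2) → Fin (K+1) // NT c} +
           Nat.card {c : Fin (m+1) → Fin (K+1) // NT c}) := by
  have h0 := card_split (fun c : Fin (m+3) → Fin (K+1) => NT c)
      (fun c => c ⟨0, Nat.zero_lt_succ _⟩ = c ⟨1, Nat.succ_lt_succ (Nat.zero_lt_succ _)⟩)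
  have h1 : Nat.card {c : Fin (m+3) → Fin (K+1) //
      NT c ∧ c ⟨0, Nat.zero_lt_succ _⟩ = c ⟨1, Nat.succ_lt_succ (Nat.zero_lt_succ _)⟩} =
      Nat.card {d : Fin (m+1) → Fin (K+1) // NT d} * K :=
    (Nat.card_congr (equivEq K m)).trans (card_nt_ne K m)
  have h2 : Nat.card {c : Fin (m+3) → Fin (K+1) //
      NT c ∧ ¬ c ⟨0, Nat.zero_lt_succ _⟩ = c ⟨1, Nat.succ_lt_succ (Nat.zero_lt_succ _)⟩} =
      Nat.card {d : Fin (m+2) → Fin (K+1) // NT d} * K :=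
    (Nat.card_congr (Equiv.subtypeEquivRight (fun c => Iff.rfl))).trans (card_nt_ne K (m+1))
  rw [h0, h1, h2]
  ring

lemma card_one (K : ℕ) : Nat.card {c : Fin 1 → Fin (K+1) // NT c} = K + 1 := by
  have hall : ∀ c : Fin 1 → Fin (K+1), NT c := fun c i h => absurd h (by omega)
  rw [Nat.card_congr (Equiv.subtypeUnivEquiv hall)]
  simp [Nat.card_eq_fintype_card]

lemma card_two (K : ℕ) : Nat.card {c : Fin 2 → Fin (K+1) // NT c} = (K + 1) * (K + 1) := by
  have hall : ∀ c : Fin 2 → Fin (K+1), NT c := fun c i h => absurd h (by omega)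
  rw [Nat.card_congr (Equiv.subtypeUnivEquiv hall)]
  simp [Nat.card_eq_fintype_card, sq]

/-- The dichromatic polynomial value, as a range sum. -/
def Ssum (K : ℕ) (n : ℕ) : ℕ :=
  ∑ i ∈ Finset.range n, Nat.choose (i+1) (n - (i+1)) * ((K+1) * K^i)

lemma Ssum_one (K : ℕ) : Ssum K 1 = K + 1 := by simp [Ssum]

lemma Ssum_two (K : ℕ) : Ssum K 2 = (K+1) * (K+1) := by
  simp [Ssum, Finset.sum_range_succ]
  ring

lemma Ssum_rec (K n : ℕ) : Ssum K (n+3) = K * (Ssum K (n+2) + Ssum K (n+1)) := by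
  unfold Ssum
  simp only [Nat.succ_sub_succ]
  rw [Finset.sum_range_succ']
  simp only [Nat.succ_sub_succ, Nat.sub_zero, pow_zero]
  rw [Nat.choose_eq_zero_of_lt (show 1 < n+2 by omega)]
  rw [Finset.sum_range_succ]
  have hP : ∀ i ∈ Finset.range (n+1),
      Nat.choose (i+1+1) (n+1-i) * ((K+1) * K^(i+1)) =
        Nat.choose (i+1) (n-i) * ((K+1) * K^i) * K
          + Nat.choose (i+1) (n+1-i) * ((K+1) * K^i) * K := by
    intro i hi
    rw [Finset.mem_range] at hi
    have h1 : n+1-i = (n-i)+1 := by omega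
    rw [h1, Nat.choose_succ_succ, pow_succ]
    ring
  rw [Finset.sum_congr rfl hP, Finset.sum_add_distrib]
  rw [Finset.sum_range_succ (fun i => Nat.choose (i+1) (n+1-i) * ((K+1) * K^i)) (n+1)]
  simp only [Nat.sub_self, Nat.choose_zero_right, ← Finset.sum_mul]
  rw [pow_succ]
  ring

lemma card_main (K : ℕ) : ∀ n : ℕ,
    Nat.card {c : Fin (n+1) → Fin (K+1) // NT c} = Ssum K (n+1) := by
  intro n
  induction n using Nat.strong_induction_on with
  | _ n ih =>
    match n with
    | 0 => rw [card_one, Ssum_one]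
    | 1 => rw [card_two, Ssum_two]
    | (m+2) =>
      rw [card_rec K m, ih (m+1) (by omega), ih m (by omega), Ssum_rec]

/-- P(Sₙ;k) = Σ_{i=1}^n C(i, n−i) · k · (k−1)^(i−1). -/
theorem stmt_17 (n : ℕ) (hn : 1 ≤ n) (k : ℕ) (hk : 1 ≤ k) :
    numColorings (Fin n) (SnAdj n) k =
      ∑ i ∈ Finset.Icc 1 n, Nat.choose i (n - i) * (k * (k - 1) ^ (i - 1)) := by
  obtain ⟨K, rfl⟩ : ∃ K, k = K + 1 := ⟨k - 1, by omega⟩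
  obtain ⟨m, rfl⟩ : ∃ m, n = m + 1 := ⟨n - 1, by omega⟩
  have h1 : numColorings (Fin (m+1)) (SnAdj (m+1)) (K+1)
      = Nat.card {c : Fin (m+1) → Fin (K+1) // NT c} :=
    Nat.card_congr (Equiv.subtypeEquivRight fun c => proper_iff c)
  rw [h1, card_main K m]
  rw [Ssum, show Finset.Icc 1 (m+1) = Finset.Ico 1 (m+2) from (Finset.Ico_add_one_right_eq_Icc 1 (m+1)).symm,
    Finset.sum_Ico_eq_sum_range]
  refine Finset.sum_congr (by norm_num) fun i hi => ?_
  simp only [Nat.add_sub_cancel]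
  rw [show 1 + i - 1 = i by omega, show 1 + i = i + 1 by omega]
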